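/- Let N ≥ 1, let A ⊆ ℝ^N be not relatively compact (equivalently, unbounded), and let α : [0, ∞) → [1, ∞) be a continuous increasing function. Let M_α := {f ∈ X : f has growth α through A}. Then M_α is pointwise 𝔠-spaceable in X: for every f ∈ M_α there exists a linear subspace W of the space of functions ℝ^N → ℝ such that dim(W) = 𝔠, f ∈ W, W ⊆ M_α ∪ {0}, and whenever a sequence (H_l)_{l∈ℕ} in W converges pointwise on ℝ^N to a function h with h ≠ 0, the function h has growth α through A. -/

import Mathlib

open MeasureTheory Filter Topology
open scoped ENNReal NNReal

noncomputable section

/-- Euclidean space `ℝ^N`. -/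
abbrev RN (N : ℕ) := EuclideanSpace ℝ (Fin N)

/-- The space `X = C^∞(ℝ^N) ∩ ⋂_{p ∈ [1,∞)} L^p(ℝ^N)` of infinitely differentiable
functions that are `p`-integrable for every real `p ≥ 1`. -/
def SmoothIntegrable (N : ℕ) : Set (RN N → ℝ) :=
  {f | ContDiff ℝ (⊤ : ℕ∞) f ∧
       ∀ p : ℝ, 1 ≤ p → MemLp f (ENNReal.ofReal p) volume}

/-- `f` is unbounded on `A`, i.e. `sup_{x ∈ A} |f x| = +∞`. -/
def UnboundedOn {N : ℕ} (A : Set (RN N)) (f : RN N → ℝ) : Prop :=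
  ∀ C : ℝ, ∃ x ∈ A, C < |f x|

/-- `nBC∞I(A) = {f ∈ X : f is unbounded on A}`. -/
def nBCI {N : ℕ} (A : Set (RN N)) : Set (RN N → ℝ) :=
  {f | f ∈ SmoothIntegrable N ∧ UnboundedOn A f}

/-- `f` has growth `α` through `A`:
`limsup_{x ∈ A, ‖x‖ → ∞} |f x| / α ‖x‖ = +∞`. -/
def HasGrowth {N : ℕ} (A : Set (RN N)) (α : ℝ → ℝ) (f : RN N → ℝ) : Prop :=
  ∀ C : ℝ, 0 < C → ∀ R : ℝ, 0 < R → ∃ x ∈ A, R < ‖x‖ ∧ C * α ‖x‖ < |f x|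

attribute [local instance] Classical.propDecidable

def bmp {N : ℕ} (z : ℕ → RN N) (r : ℕ → ℝ) (hr0 : ∀ k, 0 < r k) (k : ℕ) :
    ContDiffBump (z k) :=
  ⟨r k / 2, r k, by have := hr0 k; linarith, by have := hr0 k; linarith⟩

def dd {N : ℕ} (z : ℕ → RN N) (r a : ℕ → ℝ) (hr0 : ∀ k, 0 < r k) (b : ℕ → ℝ)
    (x : RN N) : ℝ :=
  if h : ∃ k, dist x (z k) < r k then
    b (Nat.unpair h.choose).1 * a h.choose * bmp z r hr0 h.choose x
  else 0

section dlem

variable {N : ℕ} {z : ℕ → RN N} {r a : ℕ → ℝ}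

theorem uniq_wit (hr1 : ∀ k, r k ≤ 1) (hsep : ∀ j k, j ≠ k → 5 < dist (z j) (z k))
    {x : RN N} {j k : ℕ} (hj : dist x (z j) < r j)
    (hk : dist x (z k) < r k) : j = k := by
  by_contra hne
  have h5 := hsep j k hne
  have := dist_triangle (z j) x (z k)
  have h1 := hr1 j; have h2 := hr1 k
  rw [dist_comm (z j) x] at this
  linarith

theorem dd_of_lt (hr0 : ∀ k, 0 < r k) (hr1 : ∀ k, r k ≤ 1)
    (hsep : ∀ j k, j ≠ k → 5 < dist (z j) (z k)) {b : ℕ → ℝ} {x : RN N} {k : ℕ}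
    (hx : dist x (z k) < r k) :
    dd z r a hr0 b x = b (Nat.unpair k).1 * a k * bmp z r hr0 k x := by
  have hex : ∃ k, dist x (z k) < r k := ⟨k, hx⟩
  rw [dd, dif_pos hex]
  have hc : hex.choose = k := uniq_wit hr1 hsep hex.choose_spec hx
  rw [hc]

theorem dd_of_not (hr0 : ∀ k, 0 < r k) {b : ℕ → ℝ} {x : RN N}
    (hx : ∀ k, ¬ dist x (z k) < r k) :
    dd z r a hr0 b x = 0 := by
  rw [dd, dif_neg]
  push_neg
  exact fun k => le_of_not_gt (hx k)

theorem dd_add (hr0 : ∀ k, 0 < r k) (b₁ b₂ : ℕ → ℝ) (x : RN N) :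
    dd z r a hr0 b₁ x + dd z r a hr0 b₂ x = dd z r a hr0 (fun n => b₁ n + b₂ n) x := by
  rw [dd, dd, dd]
  split_ifs with h
  · ring
  · ring

theorem dd_smul (hr0 : ∀ k, 0 < r k) (c : ℝ) (b : ℕ → ℝ) (x : RN N) :
    c * dd z r a hr0 b x = dd z r a hr0 (fun n => c * b n) x := by
  rw [dd, dd]; split_ifs with h
  · ring
  · ring

theorem dd_bzero (hr0 : ∀ k, 0 < r k) (b : ℕ → ℝ) (hb : ∀ n, b n = 0) (x : RN N) :
    dd z r a hr0 b x = 0 := by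
  rw [dd]; split_ifs with h
  · rw [hb]; ring
  · rfl

theorem dd_value (hr0 : ∀ k, 0 < r k) (hr1 : ∀ k, r k ≤ 1)
    (hsep : ∀ j k, j ≠ k → 5 < dist (z j) (z k)) (b : ℕ → ℝ) (k : ℕ) :
    dd z r a hr0 b (z k) = b (Nat.unpair k).1 * a k := by
  have hx : dist (z k) (z k) < r k := by simpa using hr0 k
  rw [dd_of_lt hr0 hr1 hsep hx, (bmp z r hr0 k).one_of_mem_closedBall, mul_one]
  simp only [Metric.mem_closedBall, dist_self, bmp]
  have := hr0 k; linarith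

theorem dd_localrep (hr0 : ∀ k, 0 < r k) (hr1 : ∀ k, r k ≤ 1)
    (hsep : ∀ j k, j ≠ k → 5 < dist (z j) (z k)) (x₀ : RN N) :
    (∃ k₀, ∀ (b : ℕ → ℝ) (x : RN N), dist x x₀ < 1 →
        dd z r a hr0 b x = b (Nat.unpair k₀).1 * a k₀ * bmp z r hr0 k₀ x) ∨
    (∀ (b : ℕ → ℝ) (x : RN N), dist x x₀ < 1 → dd z r a hr0 b x = 0) := by
  by_cases hex : ∃ k₀, dist x₀ (z k₀) < 2
  · obtain ⟨k₀, hk₀⟩ := hex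
    left
    refine ⟨k₀, fun b x hx => ?_⟩
    by_cases hw : ∃ k, dist x (z k) < r k
    · obtain ⟨k, hk⟩ := hw
      have hkk : k = k₀ := by
        by_contra hne
        have h5 := hsep k k₀ hne
        have t1 : dist (z k) (z k₀) ≤ dist (z k) x + dist x x₀ + dist x₀ (z k₀) :=
          dist_triangle4 _ _ _ _
        rw [dist_comm (z k) x] at t1
        have := hr1 k
        linarith
      subst hkk
      exact dd_of_lt hr0 hr1 hsep hk
    · push_neg at hw
      rw [dd_of_not hr0 (fun k => not_lt.mpr (hw k))]
      have hsupp : (bmp z r hr0 k₀) x = 0 := by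
        have hns : x ∉ Function.support (bmp z r hr0 k₀) := by
          rw [(bmp z r hr0 k₀).support_eq]
          simp only [Metric.mem_ball, bmp]
          exact not_lt.mpr (hw k₀)
        simpa using Function.notMem_support.mp hns
      rw [hsupp, mul_zero]
  · right
    intro b x hx
    push_neg at hex
    refine dd_of_not hr0 (fun k hk => ?_)
    have h2 := hex k
    have t := dist_triangle x₀ x (z k)
    rw [dist_comm x₀ x] at t
    have := hr1 k
    linarith

theorem dd_contDiff (hr0 : ∀ k, 0 < r k) (hr1 : ∀ k, r k ≤ 1)
    (hsep : ∀ j k, j ≠ k → 5 < dist (z j) (z k)) (b : ℕ → ℝ) :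
    ContDiff ℝ ((⊤:ℕ∞) : WithTop ℕ∞) (dd z r a hr0 b) := by
  rw [contDiff_iff_contDiffAt]
  intro x₀
  rcases dd_localrep hr0 hr1 hsep x₀ with ⟨k₀, hk₀⟩ | hz0
  · refine ContDiffAt.congr_of_eventuallyEq
      (f := fun x => b (Nat.unpair k₀).1 * a k₀ * bmp z r hr0 k₀ x) ?_ ?_
    · exact ((contDiff_const.mul ((bmp z r hr0 k₀).contDiff (n := ⊤))).contDiffAt)
    · exact Filter.eventuallyEq_of_mem (Metric.ball_mem_nhds x₀ one_pos)
        (fun y hy => hk₀ b y (by simpa [Metric.mem_ball] using hy))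
  · refine ContDiffAt.congr_of_eventuallyEq (f := fun _ => (0:ℝ)) contDiffAt_const ?_
    exact Filter.eventuallyEq_of_mem (Metric.ball_mem_nhds x₀ one_pos)
      (fun y hy => hz0 b y (by simpa [Metric.mem_ball] using hy))

end dlem

section memlp

variable {N : ℕ} {z : ℕ → RN N} {r a : ℕ → ℝ}

theorem core_summable {a : ℕ → ℝ} (ha0 : ∀ k, 0 < a k) {p : ℝ} (hp : 1 ≤ p) :
    Summable (fun k : ℕ => a k ^ p * ((2 + a k) ^ (-(k:ℝ)) * 2 ^ (-(k:ℝ)))) := by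
  have hp0 : (0:ℝ) < p := lt_of_lt_of_le one_pos hp
  set K := ⌈p⌉₊ with hK
  apply (summable_nat_add_iff K).mp
  refine Summable.of_nonneg_of_le (fun n => mul_nonneg (Real.rpow_nonneg (ha0 _).le p)
      (mul_nonneg (Real.rpow_nonneg (by linarith [ha0 (n + K)]) _)
        (Real.rpow_nonneg (by norm_num) _))) (fun n => ?_)
    ((summable_geometric_of_lt_one (by norm_num) (by norm_num : (1/2:ℝ) < 1)).mul_left (2^p))
  set k := n + K with hk
  have hA := ha0 k
  have h2A : (0:ℝ) < 2 + a k := by linarith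
  have hpk : p ≤ (k:ℝ) := by
    calc p ≤ (K:ℝ) := Nat.le_ceil p
    _ ≤ (k:ℝ) := by exact_mod_cast Nat.le_add_left K n
  have s1 : a k ^ p ≤ (2 + a k) ^ p := Real.rpow_le_rpow hA.le (by linarith) hp0.le
  have s3 : (2 + a k) ^ (p - (k:ℝ)) ≤ 2 ^ (p - (k:ℝ)) :=
    Real.rpow_le_rpow_of_nonpos two_pos (by linarith) (by linarith)
  have key : a k ^ p * (2 + a k) ^ (-(k:ℝ)) ≤ 2 ^ p * 2 ^ (-(k:ℝ)) := by
    have e1 : (2 + a k) ^ p * (2 + a k) ^ (-(k:ℝ)) = (2 + a k) ^ (p - (k:ℝ)) := by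
      rw [← Real.rpow_add h2A]; ring_nf
    have e2 : (2:ℝ) ^ (p - (k:ℝ)) = 2 ^ p * 2 ^ (-(k:ℝ)) := by
      rw [← Real.rpow_add two_pos]; ring_nf
    calc a k ^ p * (2 + a k) ^ (-(k:ℝ)) ≤ (2 + a k) ^ p * (2 + a k) ^ (-(k:ℝ)) := by
          apply mul_le_mul_of_nonneg_right s1 (Real.rpow_nonneg h2A.le _)
      _ = (2 + a k) ^ (p - (k:ℝ)) := e1
      _ ≤ 2 ^ (p - (k:ℝ)) := s3
      _ = 2 ^ p * 2 ^ (-(k:ℝ)) := e2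
  have h2k : (2:ℝ) ^ (-(k:ℝ)) ≤ (1/2:ℝ) ^ n := by
    rw [Real.rpow_neg (by norm_num : (0:ℝ) ≤ 2), Real.rpow_natCast, one_div, inv_pow]
    exact inv_anti₀ (by positivity) (pow_le_pow_right₀ (by norm_num) (Nat.le_add_right n K))
  have h2k1 : (2:ℝ) ^ (-(k:ℝ)) ≤ 1 :=
    Real.rpow_le_one_of_one_le_of_nonpos (by norm_num) (neg_nonpos.mpr (Nat.cast_nonneg k))
  calc a k ^ p * ((2 + a k) ^ (-(k:ℝ)) * 2 ^ (-(k:ℝ)))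
      = (a k ^ p * (2 + a k) ^ (-(k:ℝ))) * 2 ^ (-(k:ℝ)) := by ring
    _ ≤ (2 ^ p * 2 ^ (-(k:ℝ))) * 2 ^ (-(k:ℝ)) := by
        apply mul_le_mul_of_nonneg_right key (Real.rpow_nonneg (by norm_num) _)
    _ = 2 ^ p * (2 ^ (-(k:ℝ)) * 2 ^ (-(k:ℝ))) := by ring
    _ ≤ 2 ^ p * (1 * (1/2:ℝ) ^ n) := by
        apply mul_le_mul_of_nonneg_left _ (Real.rpow_nonneg (by norm_num) p)
        exact mul_le_mul h2k1 h2k (Real.rpow_nonneg (by norm_num) _) one_pos.le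
    _ = 2 ^ p * (1/2:ℝ) ^ n := by ring

theorem dd_memLp (hr0 : ∀ k, 0 < r k) (hr1 : ∀ k, r k ≤ 1)
    (hsep : ∀ j k, j ≠ k → 5 < dist (z j) (z k)) (ha0 : ∀ k, 0 < a k)
    (hvol : ∀ k, volume (Metric.ball (z k) (r k)) ≤
      ENNReal.ofReal ((2 + a k) ^ (-(k:ℝ)) * 2 ^ (-(k:ℝ))))
    {b : ℕ → ℝ} {M : ℝ} (hM : 0 ≤ M) (hb : ∀ n, |b n| ≤ M) {p : ℝ} (hp : 1 ≤ p) :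
    MemLp (dd z r a hr0 b) (ENNReal.ofReal p) volume := by
  have hp0 : (0:ℝ) < p := lt_of_lt_of_le one_pos hp
  have hpne : ENNReal.ofReal p ≠ 0 := by
    simp only [ne_eq, ENNReal.ofReal_eq_zero, not_le]; linarith
  constructor
  · exact ((dd_contDiff hr0 hr1 hsep b).continuous).aestronglyMeasurable
  · rw [eLpNorm_eq_lintegral_rpow_enorm_toReal hpne ENNReal.ofReal_ne_top,
      ENNReal.toReal_ofReal hp0.le]
    refine ENNReal.rpow_lt_top_of_nonneg (by positivity) (ne_of_lt ?_)
    have hpt1 : ∀ x : RN N, ‖dd z r a hr0 b x‖ₑ ^ p ≤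
        ∑' k, Set.indicator (Metric.ball (z k) (r k))
          (fun _ => ENNReal.ofReal (M * a k) ^ p) x := by
      intro x
      by_cases hw : ∃ k, dist x (z k) < r k
      · obtain ⟨k, hk⟩ := hw
        refine le_trans ?_ (ENNReal.le_tsum k)
        rw [Set.indicator_of_mem (Metric.mem_ball.mpr hk)]
        rw [Real.enorm_eq_ofReal_abs, dd_of_lt hr0 hr1 hsep hk]
        refine ENNReal.rpow_le_rpow (ENNReal.ofReal_le_ofReal ?_) hp0.le
        have h1 := hb (Nat.unpair k).1
        have h2 := (bmp z r hr0 k).nonneg (x := x)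
        have h3 := (bmp z r hr0 k).le_one (x := x)
        have h4 := (ha0 k)
        calc |b (Nat.unpair k).1 * a k * (bmp z r hr0 k) x|
            = |b (Nat.unpair k).1| * a k * (bmp z r hr0 k) x := by
              rw [abs_mul, abs_mul, abs_of_pos h4, abs_of_nonneg h2]
          _ ≤ M * a k * 1 := by
              apply mul_le_mul _ h3 h2 (by positivity)
              exact mul_le_mul_of_nonneg_right h1 h4.le
          _ = M * a k := by ring
      · push_neg at hw
        rw [dd_of_not hr0 (fun k => not_lt.mpr (hw k))]
        simp only [enorm_zero]
        rw [ENNReal.zero_rpow_of_pos hp0]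
        exact zero_le
    calc ∫⁻ x, ‖dd z r a hr0 b x‖ₑ ^ p ∂volume
        ≤ ∫⁻ x, ∑' k, Set.indicator (Metric.ball (z k) (r k))
            (fun _ => ENNReal.ofReal (M * a k) ^ p) x ∂volume := lintegral_mono hpt1
      _ = ∑' k, ENNReal.ofReal (M * a k) ^ p * volume (Metric.ball (z k) (r k)) := by
          rw [lintegral_tsum (fun k =>
            ((measurable_const).indicator measurableSet_ball).aemeasurable)]
          congr 1
          funext k
          rw [lintegral_indicator measurableSet_ball, setLIntegral_const]
      _ ≤ ∑' k, ENNReal.ofReal (M ^ p * (a k ^ p * ((2 + a k) ^ (-(k:ℝ)) * 2 ^ (-(k:ℝ))))) := by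
          refine Summable.tsum_le_tsum (fun k => ?_) ENNReal.summable ENNReal.summable
          have h4 := ha0 k
          have e1 : ENNReal.ofReal (M * a k) ^ p = ENNReal.ofReal ((M * a k) ^ p) :=
            ENNReal.ofReal_rpow_of_nonneg (by positivity) hp0.le
          rw [e1]
          calc ENNReal.ofReal ((M * a k) ^ p) * volume (Metric.ball (z k) (r k))
              ≤ ENNReal.ofReal ((M * a k) ^ p) *
                ENNReal.ofReal ((2 + a k) ^ (-(k:ℝ)) * 2 ^ (-(k:ℝ))) :=
                mul_le_mul_right (hvol k) _
            _ = ENNReal.ofReal ((M * a k) ^ p * ((2 + a k) ^ (-(k:ℝ)) * 2 ^ (-(k:ℝ)))) := by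
                rw [← ENNReal.ofReal_mul (by positivity)]
            _ = ENNReal.ofReal (M ^ p * (a k ^ p * ((2 + a k) ^ (-(k:ℝ)) * 2 ^ (-(k:ℝ))))) := by
                rw [Real.mul_rpow hM h4.le]; ring_nf
      _ = ENNReal.ofReal (∑' k, M ^ p * (a k ^ p * ((2 + a k) ^ (-(k:ℝ)) * 2 ^ (-(k:ℝ))))) := by
          rw [ENNReal.ofReal_tsum_of_nonneg (fun k => ?_) ((core_summable ha0 hp).mul_left _)]
          have h4 := ha0 k
          have : (0:ℝ) < 2 + a k := by linarith
          positivity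
      _ < ⊤ := ENNReal.ofReal_lt_top

end memlp

theorem exists_small_ball {N : ℕ} (hN : 1 ≤ N) (c : RN N) (η : ℝ≥0∞) (hη : 0 < η) :
    ∃ ρ : ℝ, 0 < ρ ∧ ρ ≤ 1 ∧ volume (Metric.ball c ρ) ≤ η := by
  have hNtriv : Nontrivial (RN N) := by
    have hpos : 0 < N := hN
    exact ⟨⟨EuclideanSpace.single ⟨0, hpos⟩ (1:ℝ), 0, by
      intro h
      have h2 := congrArg (fun v : RN N => v ⟨0, hpos⟩) h
      simp [EuclideanSpace.single_apply] at h2⟩⟩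
  set V := volume (Metric.ball (0:RN N) 1) with hV
  by_cases hV0 : V = 0
  · refine ⟨1, one_pos, le_refl _, ?_⟩
    rw [Measure.addHaar_ball volume c one_pos.le, ← hV, hV0, mul_zero]
    exact zero_le
  · have hVt : V ≠ ⊤ := measure_ball_lt_top.ne
    set v := V.toReal with hv
    have hv0 : 0 < v := ENNReal.toReal_pos hV0 hVt
    have hmin0 : (min η 1) ≠ 0 := (lt_min hη zero_lt_one).ne'
    have hmint : (min η 1) ≠ ⊤ := ne_top_of_le_ne_top (by simp) (min_le_right _ _)
    set e := (min η 1).toReal with he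
    have he0 : 0 < e := ENNReal.toReal_pos hmin0 hmint
    set q := e / (2 * v) with hq
    have hq0 : 0 < q := by positivity
    refine ⟨min 1 q, lt_min one_pos hq0, min_le_left _ _, ?_⟩
    rw [Measure.addHaar_ball volume c (le_of_lt (lt_min one_pos hq0)), ← hV]
    have hrN : (min 1 q) ^ (Module.finrank ℝ (RN N)) ≤ q := by
      have hle1 : min 1 q ≤ 1 := min_le_left _ _
      have h0 : (0:ℝ) ≤ min 1 q := (lt_min one_pos hq0).le
      have hfr : 1 ≤ Module.finrank ℝ (RN N) := by
        rw [finrank_euclideanSpace, Fintype.card_fin]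
        exact hN
      calc (min 1 q) ^ (Module.finrank ℝ (RN N)) ≤ (min 1 q) ^ 1 :=
            pow_le_pow_of_le_one h0 hle1 hfr
        _ = min 1 q := pow_one _
        _ ≤ q := min_le_right _ _
    have hqv : q * v = e / 2 := by
      rw [hq]; field_simp
    calc ENNReal.ofReal ((min 1 q) ^ (Module.finrank ℝ (RN N))) * V
        ≤ ENNReal.ofReal q * ENNReal.ofReal v :=
          mul_le_mul' (ENNReal.ofReal_le_ofReal hrN)
            (le_of_eq (ENNReal.ofReal_toReal hVt).symm)
      _ = ENNReal.ofReal (q * v) := (ENNReal.ofReal_mul hq0.le).symm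
      _ ≤ ENNReal.ofReal e := ENNReal.ofReal_le_ofReal (by rw [hqv]; linarith)
      _ = min η 1 := by rw [he, ENNReal.ofReal_toReal hmint]
      _ ≤ η := min_le_left _ _

def escSeq {N : ℕ} (A : Set (RN N)) (hesc : ∀ R : ℝ, ∃ x ∈ A, R < ‖x‖) (R₀ : ℝ) :
    ℕ → RN N
  | 0 => (hesc R₀).choose
  | k+1 => (hesc (‖escSeq A hesc R₀ k‖ + 5)).choose

theorem escSeq_mem {N : ℕ} (A : Set (RN N)) (hesc : ∀ R : ℝ, ∃ x ∈ A, R < ‖x‖)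
    (R₀ : ℝ) (k : ℕ) : escSeq A hesc R₀ k ∈ A := by
  cases k with
  | zero => exact (hesc R₀).choose_spec.1
  | succ k => exact (hesc _).choose_spec.1

theorem escSeq_zero {N : ℕ} (A : Set (RN N)) (hesc : ∀ R : ℝ, ∃ x ∈ A, R < ‖x‖)
    (R₀ : ℝ) : R₀ < ‖escSeq A hesc R₀ 0‖ := (hesc R₀).choose_spec.2

theorem escSeq_succ {N : ℕ} (A : Set (RN N)) (hesc : ∀ R : ℝ, ∃ x ∈ A, R < ‖x‖)
    (R₀ : ℝ) (k : ℕ) :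
    ‖escSeq A hesc R₀ k‖ + 5 < ‖escSeq A hesc R₀ (k+1)‖ :=
  (hesc _).choose_spec.2

set_option maxHeartbeats 2000000 in
theorem growth_pointwise_continuum_spaceable' (N : ℕ) (hN : 1 ≤ N)
    (A : Set (RN N)) (hA : ¬ Bornology.IsBounded A)
    (α : ℝ → ℝ) (hα_cont : ContinuousOn α (Set.Ici 0))
    (hα_mono : MonotoneOn α (Set.Ici 0))
    (hα_ge : ∀ x ∈ Set.Ici (0 : ℝ), 1 ≤ α x) :
    ∀ f ∈ {f | f ∈ {f | ContDiff ℝ (⊤ : ℕ∞) f ∧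
       ∀ p : ℝ, 1 ≤ p → MemLp f (ENNReal.ofReal p) volume} ∧
       (∀ C : ℝ, 0 < C → ∀ R : ℝ, 0 < R → ∃ x ∈ A, R < ‖x‖ ∧ C * α ‖x‖ < |f x|)},
      ∃ W : Submodule ℝ (RN N → ℝ),
        Module.rank ℝ W = Cardinal.continuum ∧ f ∈ W ∧
        (W : Set (RN N → ℝ)) ⊆ {f | f ∈ {f | ContDiff ℝ (⊤ : ℕ∞) f ∧
            ∀ p : ℝ, 1 ≤ p → MemLp f (ENNReal.ofReal p) volume} ∧
          (∀ C : ℝ, 0 < C → ∀ R : ℝ, 0 < R → ∃ x ∈ A, R < ‖x‖ ∧ C * α ‖x‖ < |f x|)} ∪ {0} ∧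
        ∀ H : ℕ → (RN N → ℝ), (∀ l : ℕ, H l ∈ W) →
          ∀ h : RN N → ℝ, (∀ x : RN N, Tendsto (fun l => H l x) atTop (𝓝 (h x))) →
            h ≠ 0 → (∀ C : ℝ, 0 < C → ∀ R : ℝ, 0 < R → ∃ x ∈ A, R < ‖x‖ ∧ C * α ‖x‖ < |h x|) := by
  intro f hf
  obtain ⟨hfX, hfG⟩ := hf
  have hα1 : ∀ x : RN N, 1 ≤ α ‖x‖ := fun x => hα_ge _ (norm_nonneg x)
  obtain ⟨y, hyA, hy1, hyv⟩ := hfG 1 one_pos 1 one_pos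
  have hfy : f y ≠ 0 := by
    have h1 := hα1 y
    have h2 : 0 < |f y| := by linarith [hyv]
    intro h0; rw [h0] at h2; simp at h2
  have hesc : ∀ R : ℝ, ∃ x ∈ A, R < ‖x‖ := by
    intro R
    obtain ⟨x, hxA, hxR, -⟩ :=
      hfG 1 one_pos (max R 1) (lt_of_lt_of_le one_pos (le_max_right R 1))
    exact ⟨x, hxA, lt_of_le_of_lt (le_max_left R 1) hxR⟩
  set z : ℕ → RN N := escSeq A hesc (‖y‖ + 5) with hzdef
  have hzA : ∀ k, z k ∈ A := escSeq_mem A hesc _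
  have hz0 : ‖y‖ + 5 < ‖z 0‖ := escSeq_zero A hesc _
  have hzs : ∀ k, ‖z k‖ + 5 < ‖z (k+1)‖ := escSeq_succ A hesc _
  have hmono : ∀ j k : ℕ, j < k → ‖z j‖ + 5 < ‖z k‖ := by
    intro j k hjk
    induction k with
    | zero => exact absurd hjk (Nat.not_lt_zero j)
    | succ k ih =>
      rcases Nat.lt_succ_iff_lt_or_eq.mp hjk with hc | hc
      · have h1 := ih hc; have h2 := hzs k; linarith
      · subst hc; exact hzs j
  have hsepk : ∀ j k : ℕ, j < k → 5 < dist (z j) (z k) := by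
    intro j k hjk
    have h1 := hmono j k hjk
    have h2 : ‖z k‖ - ‖z j‖ ≤ dist (z j) (z k) := by
      rw [dist_comm, dist_eq_norm]
      exact norm_sub_norm_le _ _
    linarith
  have hsep : ∀ j k : ℕ, j ≠ k → 5 < dist (z j) (z k) := by
    intro j k hne
    rcases lt_or_gt_of_ne hne with hc | hc
    · exact hsepk j k hc
    · rw [dist_comm]; exact hsepk k j hc
  have hky : ∀ k : ℕ, (k:ℝ) < ‖z k‖ := by
    intro k; induction k with
    | zero =>
      have h1 := norm_nonneg y
      simp only [Nat.cast_zero]; linarith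
    | succ k ih =>
      have h1 := hzs k; push_cast; linarith
  have hzny : ∀ k, ‖y‖ + 5 < ‖z k‖ := by
    intro k; cases k with
    | zero => exact hz0
    | succ k =>
      have h1 := hmono 0 (k+1) (Nat.succ_pos k); linarith
  set a : ℕ → ℝ := fun k => ((k:ℝ)+1) * (1 + |f (z k)|) * (1 + α ‖z k‖) with hadef
  have ha0 : ∀ k, 0 < a k := by
    intro k
    have h1 : (0:ℝ) < (k:ℝ)+1 := by positivity
    have h2 : (0:ℝ) < 1 + |f (z k)| := by positivity
    have h3 : (0:ℝ) < 1 + α ‖z k‖ := by linarith [hα1 (z k)]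
    exact mul_pos (mul_pos h1 h2) h3
  have hrex : ∀ k : ℕ, ∃ ρ : ℝ, 0 < ρ ∧ ρ ≤ 1 ∧ volume (Metric.ball (z k) ρ) ≤
      ENNReal.ofReal ((2 + a k) ^ (-(k:ℝ)) * 2 ^ (-(k:ℝ))) := by
    intro k
    apply exists_small_ball hN
    apply ENNReal.ofReal_pos.mpr
    have h1 := ha0 k
    have h2 : (0:ℝ) < 2 + a k := by linarith
    positivity
  choose r hr0 hr1 hvol using hrex
  have hywit : ∀ k, ¬ dist y (z k) < r k := by
    intro k hk
    have h2 : ‖z k‖ - ‖y‖ ≤ dist y (z k) := by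
      rw [dist_comm, dist_eq_norm]
      exact norm_sub_norm_le _ _
    have h3 := hzny k; have h4 := hr1 k; linarith
  have hdy : ∀ b, dd z r a hr0 b y = 0 := fun b =>
    dd_of_not hr0 hywit
  -- growth through the anchors
  have hgrow : ∀ (c β : ℝ), β ≠ 0 → ∀ n : ℕ, ∀ g : RN N → ℝ,
      (∀ m : ℕ, g (z (Nat.pair n m)) = c * f (z (Nat.pair n m)) + β * a (Nat.pair n m)) →
      (∀ C : ℝ, 0 < C → ∀ R : ℝ, 0 < R → ∃ x ∈ A, R < ‖x‖ ∧ C * α ‖x‖ < |g x|) := by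
    intro c β hβ n g hg C hC R hR
    obtain ⟨m, hm⟩ := exists_nat_gt (max R ((max |c| C + 1) / |β|))
    set k := Nat.pair n m with hkdef
    have hmk : (m:ℝ) ≤ (k:ℝ) := by exact_mod_cast Nat.right_le_pair n m
    have hRk : R < ‖z k‖ := by
      have h1 : R < (m:ℝ) := lt_of_le_of_lt (le_max_left _ _) hm
      have h2 := hky k; linarith
    refine ⟨z k, hzA k, hRk, ?_⟩
    have hβpos : 0 < |β| := abs_pos.mpr hβ
    have h1 : (max |c| C + 1) / |β| < (m:ℝ) := lt_of_le_of_lt (le_max_right _ _) hm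
    rw [div_lt_iff₀ hβpos] at h1
    have h2 : max |c| C + 1 ≤ |β| * ((k:ℝ)+1) := by nlinarith
    set u := |f (z k)| with hu
    set v := α ‖z k‖ with hv
    have hu0 : 0 ≤ u := abs_nonneg _
    have hv1 : 1 ≤ v := hα1 (z k)
    have hval : g (z k) = c * f (z k) + β * a k := hg m
    have habs : |β| * a k - |c| * u ≤ |g (z k)| := by
      have e1 : |β * a k| = |β| * a k := by rw [abs_mul, abs_of_pos (ha0 k)]
      have e2 : |c * f (z k)| = |c| * u := abs_mul c (f (z k))
      have t2 : |β * a k| ≤ |g (z k)| + |c * f (z k)| := by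
        have e3 : β * a k = (c * f (z k) + β * a k) + (-(c * f (z k))) := by ring
        rw [e3]
        calc |(c * f (z k) + β * a k) + (-(c * f (z k)))|
            ≤ |c * f (z k) + β * a k| + |(-(c * f (z k)))| := abs_add_le _ _
          _ = |g (z k)| + |c * f (z k)| := by rw [← hval, abs_neg]
      rw [e1, e2] at t2; linarith
    have hak : a k = ((k:ℝ)+1) * (1 + u) * (1 + v) := rfl
    set m' := |β| * ((k:ℝ)+1) with hm'
    have hm'pos : 0 < m' := mul_pos hβpos (by positivity)
    have hc' : |c| + 1 ≤ m' := le_trans (by linarith [le_max_left |c| C]) h2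
    have hC' : C + 1 ≤ m' := le_trans (by linarith [le_max_right |c| C]) h2
    have key1 : |β| * a k = m' * ((1+u)*(1+v)) := by rw [hak]; ring
    have key2 : u + v ≤ (1+u)*(1+v) := by nlinarith
    have key3 : m' * (u+v) ≤ m' * ((1+u)*(1+v)) :=
      mul_le_mul_of_nonneg_left key2 hm'pos.le
    have key5 : (|c|+1) * u ≤ m' * u := mul_le_mul_of_nonneg_right hc' hu0
    have key6 : (C+1) * v ≤ m' * v := mul_le_mul_of_nonneg_right hC' (by linarith)
    have hfinal : C * v < |β| * a k - |c| * u := by nlinarith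
    calc C * α ‖z k‖ = C * v := rfl
      _ < |β| * a k - |c| * u := hfinal
      _ ≤ |g (z k)| := habs
  have hgrowc : ∀ c : ℝ, c ≠ 0 →
      (∀ C : ℝ, 0 < C → ∀ R : ℝ, 0 < R → ∃ x ∈ A, R < ‖x‖ ∧ C * α ‖x‖ < |c * f x|) := by
    intro c hc C hC R hR
    obtain ⟨x, hxA, hxR, hx⟩ := hfG (C / |c|) (div_pos hC (abs_pos.mpr hc)) R hR
    refine ⟨x, hxA, hxR, ?_⟩
    rw [abs_mul]
    have h1 := mul_lt_mul_of_pos_left hx (abs_pos.mpr hc)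
    have e : |c| * (C / |c| * α ‖x‖) = C * α ‖x‖ := by
      field_simp
    rw [e] at h1; exact h1
  -- the submodule
  set W : Submodule ℝ (RN N → ℝ) :=
    { carrier := {g | ∃ c : ℝ, ∃ b : ℕ → ℝ, (∃ M : ℝ, 0 ≤ M ∧ ∀ n, |b n| ≤ M) ∧
        g = fun x => c * f x + dd z r a hr0 b x}
      add_mem' := by
        rintro g1 g2 ⟨c1, b1, ⟨M1, hM1, hb1⟩, rfl⟩ ⟨c2, b2, ⟨M2, hM2, hb2⟩, rfl⟩
        refine ⟨c1 + c2, fun n => b1 n + b2 n, ⟨M1 + M2, by linarith,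
          fun n => (abs_add_le _ _).trans (add_le_add (hb1 n) (hb2 n))⟩, ?_⟩
        funext x
        show (c1 * f x + dd z r a hr0 b1 x) + (c2 * f x + dd z r a hr0 b2 x) = _
        rw [← dd_add hr0 b1 b2 x]; ring
      zero_mem' := by
        refine ⟨0, fun _ => 0, ⟨0, le_refl 0, fun n => by simp⟩, ?_⟩
        funext x
        rw [dd_bzero hr0 _ (fun _ => rfl) x]
        simp
      smul_mem' := by
        rintro c g ⟨c1, b1, ⟨M1, hM1, hb1⟩, rfl⟩
        refine ⟨c * c1, fun n => c * b1 n, ⟨|c| * M1, by positivity,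
          fun n => by rw [abs_mul]; exact mul_le_mul_of_nonneg_left (hb1 n) (abs_nonneg c)⟩, ?_⟩
        funext x
        show c * (c1 * f x + dd z r a hr0 b1 x) = _
        rw [mul_add, dd_smul hr0 c b1 x]; ring } with hWdef
  have hmemW : ∀ g, g ∈ W ↔ ∃ c : ℝ, ∃ b : ℕ → ℝ, (∃ M : ℝ, 0 ≤ M ∧ ∀ n, |b n| ≤ M) ∧
      g = fun x => c * f x + dd z r a hr0 b x := fun g => Iff.rfl
  have hfW : f ∈ W := by
    refine ⟨1, fun _ => 0, ⟨0, le_refl 0, fun n => by simp⟩, ?_⟩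
    funext x
    rw [dd_bzero hr0 _ (fun _ => rfl) x, one_mul, add_zero]
  have hXmem : ∀ (c : ℝ) (b : ℕ → ℝ) (M : ℝ), 0 ≤ M → (∀ n, |b n| ≤ M) →
      ContDiff ℝ (⊤ : ℕ∞) (fun x => c * f x + dd z r a hr0 b x) ∧
      ∀ p : ℝ, 1 ≤ p → MemLp (fun x => c * f x + dd z r a hr0 b x) (ENNReal.ofReal p) volume := by
    intro c b M hM hb
    constructor
    · exact (contDiff_const.mul hfX.1).add (dd_contDiff hr0 hr1 hsep b)
    · intro p hp
      have h1 : MemLp (fun x => c * f x) (ENNReal.ofReal p) volume := (hfX.2 p hp).const_mul c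
      have h2 := dd_memLp hr0 hr1 hsep ha0 hvol hM hb hp
      exact h1.add h2
  -- subset property
  have hsub : (W : Set (RN N → ℝ)) ⊆ {g | g ∈ {g | ContDiff ℝ (⊤ : ℕ∞) g ∧
        ∀ p : ℝ, 1 ≤ p → MemLp g (ENNReal.ofReal p) volume} ∧
      (∀ C : ℝ, 0 < C → ∀ R : ℝ, 0 < R → ∃ x ∈ A, R < ‖x‖ ∧ C * α ‖x‖ < |g x|)} ∪ {0} := by
    rintro g ⟨c, b, ⟨M, hM, hb⟩, rfl⟩
    by_cases hbz : ∀ n, b n = 0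
    · by_cases hc : c = 0
      · right
        subst hc
        simp only [Set.mem_singleton_iff]
        funext x
        rw [dd_bzero hr0 b hbz x]
        simp
      · left
        refine ⟨hXmem c b M hM hb, ?_⟩
        have heq : (fun x => c * f x + dd z r a hr0 b x) = fun x => c * f x :=
          funext fun x => by rw [dd_bzero hr0 b hbz x, add_zero]
        rw [heq]
        exact hgrowc c hc
    · push_neg at hbz
      obtain ⟨n, hn⟩ := hbz
      left
      refine ⟨hXmem c b M hM hb, hgrow c (b n) hn n _ (fun m => ?_)⟩
      show c * f (z (Nat.pair n m)) + dd z r a hr0 b (z (Nat.pair n m)) = _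
      rw [dd_value hr0 hr1 hsep b (Nat.pair n m), Nat.unpair_pair]
  -- sequential stability
  have hseq : ∀ H : ℕ → (RN N → ℝ), (∀ l : ℕ, H l ∈ W) →
      ∀ h : RN N → ℝ, (∀ x : RN N, Tendsto (fun l => H l x) atTop (𝓝 (h x))) →
        h ≠ 0 → (∀ C : ℝ, 0 < C → ∀ R : ℝ, 0 < R → ∃ x ∈ A, R < ‖x‖ ∧ C * α ‖x‖ < |h x|) := by
    intro H hHW h hconv hne
    have hHW' : ∀ l, ∃ c : ℝ, ∃ b : ℕ → ℝ, (∃ M : ℝ, 0 ≤ M ∧ ∀ n, |b n| ≤ M) ∧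
        H l = fun x => c * f x + dd z r a hr0 b x := fun l => hHW l
    choose cc bb hbd heq using hHW'
    have hccval : ∀ l, cc l = H l y * (f y)⁻¹ := by
      intro l
      have h1 := congrFun (heq l) y
      rw [hdy (bb l), add_zero] at h1
      rw [h1]
      field_simp
    set cinf := h y * (f y)⁻¹ with hcinf
    have hcc : Tendsto cc atTop (𝓝 cinf) :=
      ((hconv y).mul_const (f y)⁻¹).congr (fun l => (hccval l).symm)
    have hHval : ∀ l k, H l (z k) = cc l * f (z k) + bb l (Nat.unpair k).1 * a k := by
      intro l k
      have h1 := congrFun (heq l) (z k)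
      rwa [dd_value hr0 hr1 hsep (bb l) k] at h1
    set bet : ℕ → ℝ := fun n =>
      (h (z (Nat.pair n 0)) - cinf * f (z (Nat.pair n 0))) * (a (Nat.pair n 0))⁻¹ with hbet
    have hbb : ∀ n, Tendsto (fun l => bb l n) atTop (𝓝 (bet n)) := by
      intro n
      have hbval : ∀ l, bb l n =
          (H l (z (Nat.pair n 0)) - cc l * f (z (Nat.pair n 0))) * (a (Nat.pair n 0))⁻¹ := by
        intro l
        have h1 := hHval l (Nat.pair n 0)
        rw [Nat.unpair_pair] at h1
        rw [h1]
        field_simp [(ha0 (Nat.pair n 0)).ne']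
        ring
      have t : Tendsto (fun l =>
          (H l (z (Nat.pair n 0)) - cc l * f (z (Nat.pair n 0))) * (a (Nat.pair n 0))⁻¹)
          atTop (𝓝 ((h (z (Nat.pair n 0)) - cinf * f (z (Nat.pair n 0))) * (a (Nat.pair n 0))⁻¹)) :=
        ((hconv (z (Nat.pair n 0))).sub (hcc.mul_const _)).mul_const _
      exact t.congr (fun l => (hbval l).symm)
    have hanchor : ∀ k, h (z k) = cinf * f (z k) + bet (Nat.unpair k).1 * a k := by
      intro k
      refine tendsto_nhds_unique (hconv (z k)) ?_
      have t := (hcc.mul_const (f (z k))).add ((hbb (Nat.unpair k).1).mul_const (a k))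
      exact t.congr (fun l => (hHval l k).symm)
    by_cases hbz : ∀ n, bet n = 0
    · have hh : h = fun x => cinf * f x := by
        funext x
        refine tendsto_nhds_unique (hconv x) ?_
        have hddt : Tendsto (fun l => dd z r a hr0 (bb l) x) atTop (𝓝 0) := by
          by_cases hw : ∃ k, dist x (z k) < r k
          · obtain ⟨k, hk⟩ := hw
            have e : ∀ l, dd z r a hr0 (bb l) x =
                bb l (Nat.unpair k).1 * (a k * bmp z r hr0 k x) := by
              intro l; rw [dd_of_lt hr0 hr1 hsep hk]; ring
            have t := (hbb (Nat.unpair k).1).mul_const (a k * bmp z r hr0 k x)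
            rw [hbz, zero_mul] at t
            exact t.congr (fun l => (e l).symm)
          · push_neg at hw
            have e : ∀ l, dd z r a hr0 (bb l) x = 0 := fun l =>
              dd_of_not hr0 (fun k => not_lt.mpr (hw k))
            exact tendsto_const_nhds.congr (fun l => (e l).symm)
        have t := (hcc.mul_const (f x)).add hddt
        rw [add_zero] at t
        exact t.congr (fun l => (congrFun (heq l) x).symm)
      have hc0 : cinf ≠ 0 := by
        intro h0
        apply hne
        rw [hh, h0]
        funext x; simp
      rw [hh]
      exact hgrowc cinf hc0
    · push_neg at hbz
      obtain ⟨n, hn⟩ := hbz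
      refine hgrow cinf (bet n) hn n h (fun m => ?_)
      have h1 := hanchor (Nat.pair n m)
      rwa [Nat.unpair_pair] at h1
  -- rank upper bound
  have hrank_le : Module.rank ℝ W ≤ Cardinal.continuum := by
    set S : Set (RN N → ℝ) := insert f (Set.range
      (fun q : {b : ℕ → ℝ // ∃ M : ℝ, 0 ≤ M ∧ ∀ n, |b n| ≤ M} => dd z r a hr0 q.1)) with hS
    have hWS : W ≤ Submodule.span ℝ S := by
      rintro g ⟨c, b, hbM, rfl⟩
      have h1 : f ∈ Submodule.span ℝ S := Submodule.subset_span (Set.mem_insert _ _)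
      have h2 : dd z r a hr0 b ∈ Submodule.span ℝ S :=
        Submodule.subset_span (Set.mem_insert_of_mem _ ⟨⟨b, hbM⟩, rfl⟩)
      have h3 := Submodule.add_mem _ (Submodule.smul_mem _ c h1) h2
      have he : (fun x => c * f x + dd z r a hr0 b x) = c • f + dd z r a hr0 b :=
        funext fun x => by simp [Pi.add_apply, Pi.smul_apply, smul_eq_mul]
      rw [he]
      exact h3
    have hmk : Cardinal.mk (ℕ → ℝ) = Cardinal.continuum := by
      rw [← Cardinal.power_def ℝ ℕ, Cardinal.mk_real, Cardinal.mk_nat,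
        ← Cardinal.two_power_aleph0, ← Cardinal.power_mul, Cardinal.aleph0_mul_aleph0]
    calc Module.rank ℝ W ≤ Module.rank ℝ (Submodule.span ℝ S) := Submodule.rank_mono hWS
      _ ≤ Cardinal.mk S := rank_span_le S
      _ ≤ Cardinal.mk (Set.range
          (fun q : {b : ℕ → ℝ // ∃ M : ℝ, 0 ≤ M ∧ ∀ n, |b n| ≤ M} => dd z r a hr0 q.1)) + 1 :=
        Cardinal.mk_insert_le
      _ ≤ Cardinal.mk {b : ℕ → ℝ // ∃ M : ℝ, 0 ≤ M ∧ ∀ n, |b n| ≤ M} + 1 :=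
        add_le_add_left Cardinal.mk_range_le 1
      _ ≤ Cardinal.mk (ℕ → ℝ) + 1 := add_le_add_left (Cardinal.mk_subtype_le _) 1
      _ = Cardinal.continuum + 1 := by rw [hmk]
      _ ≤ Cardinal.continuum + Cardinal.continuum :=
        add_le_add_right (le_trans Cardinal.one_le_aleph0 Cardinal.aleph0_le_continuum) _
      _ = Cardinal.continuum := Cardinal.add_eq_self Cardinal.aleph0_le_continuum
  -- rank lower bound
  have hrank_ge : Cardinal.continuum ≤ Module.rank ℝ W := by
    set vfun : Set.Ioo (0:ℝ) 1 → (RN N → ℝ) :=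
      fun t => dd z r a hr0 (fun n => (t:ℝ)^n) with hvfun
    have hmemv : ∀ t, vfun t ∈ W := by
      intro t
      refine ⟨0, fun n => (t:ℝ)^n, ⟨1, zero_le_one, fun n => ?_⟩, ?_⟩
      · rw [abs_pow]
        exact pow_le_one₀ (abs_nonneg _) (abs_le.mpr ⟨by linarith [t.2.1], t.2.2.le⟩)
      · funext x; rw [zero_mul, zero_add]
    set vv : Set.Ioo (0:ℝ) 1 → W := fun t => ⟨vfun t, hmemv t⟩ with hvv
    let Phi : (RN N → ℝ) →ₗ[ℝ] (ℕ → ℝ) :=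
      { toFun := fun g n => g (z (Nat.pair n 0)) * (a (Nat.pair n 0))⁻¹
        map_add' := fun g1 g2 => funext fun n => by
          simp only [Pi.add_apply]; ring
        map_smul' := fun c g => funext fun n => by
          simp only [Pi.smul_apply, smul_eq_mul, RingHom.id_apply]; ring }
    have hgeom : LinearIndependent ℝ
        (fun t : Set.Ioo (0:ℝ) 1 => fun n : ℕ => (t:ℝ)^n) := by
      have h0 := linearIndependent_monoidHom (Multiplicative ℕ) ℝ
      have hinj : Function.Injective
          (fun t : Set.Ioo (0:ℝ) 1 => powersHom ℝ (t:ℝ)) := by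
        intro t1 t2 h12
        have h1 := congrArg (fun φ : Multiplicative ℕ →* ℝ =>
          φ (Multiplicative.ofAdd 1)) h12
        simp only [powersHom_apply] at h1
        exact Subtype.ext (by simpa using h1)
      exact h0.comp _ hinj
    have hli : LinearIndependent ℝ vv := by
      apply LinearIndependent.of_comp W.subtype
      apply LinearIndependent.of_comp Phi
      have he : (⇑Phi ∘ ⇑W.subtype ∘ vv) =
          fun t : Set.Ioo (0:ℝ) 1 => fun n : ℕ => (t:ℝ)^n := by
        funext t n
        show vfun t (z (Nat.pair n 0)) * (a (Nat.pair n 0))⁻¹ = (t:ℝ)^n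
        rw [hvfun]
        simp only []
        rw [dd_value hr0 hr1 hsep _ (Nat.pair n 0), Nat.unpair_pair]
        field_simp [(ha0 (Nat.pair n 0)).ne']
      rw [he]
      exact hgeom
    have h1 := hli.cardinal_le_rank
    rwa [Cardinal.mk_Ioo_real zero_lt_one] at h1
  exact ⟨W, le_antisymm hrank_le hrank_ge, hfW, hsub, hseq⟩


/-- The set `M_α` of elements of `X` having growth `α` through `A` is
pointwise `𝔠`-spaceable in `X`. -/
theorem growth_pointwise_continuum_spaceable (N : ℕ) (hN : 1 ≤ N)
    (A : Set (RN N)) (hA : ¬ Bornology.IsBounded A)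
    (α : ℝ → ℝ) (hα_cont : ContinuousOn α (Set.Ici 0))
    (hα_mono : MonotoneOn α (Set.Ici 0))
    (hα_ge : ∀ x ∈ Set.Ici (0 : ℝ), 1 ≤ α x) :
    ∀ f ∈ {f ∈ SmoothIntegrable N | HasGrowth A α f},
      ∃ W : Submodule ℝ (RN N → ℝ),
        Module.rank ℝ W = Cardinal.continuum ∧ f ∈ W ∧
        (W : Set (RN N → ℝ)) ⊆ {f ∈ SmoothIntegrable N | HasGrowth A α f} ∪ {0} ∧
        ∀ H : ℕ → (RN N → ℝ), (∀ l : ℕ, H l ∈ W) →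
          ∀ h : RN N → ℝ, (∀ x : RN N, Tendsto (fun l => H l x) atTop (𝓝 (h x))) →
            h ≠ 0 → HasGrowth A α h := by
  exact growth_pointwise_continuum_spaceable' N hN A hA α hα_cont hα_mono hα_ge
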